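/- The α-logarithmic negativity is faithful: for every bipartite state ρ_AB and α ≥ 1, E_N^α(ρ_AB) ≥ 0, and E_N^α(ρ_AB) = 0 if and only if ρ_AB is a PPT state. -/

import Mathlib

open scoped Classical
open Matrix ComplexOrder

noncomputable section

variable {n : Type*} [Fintype n] [DecidableEq n]

/-- Real power of a (Hermitian) matrix via the continuous functional calculus. -/
noncomputable def mpow (A : Matrix n n ℂ) (r : ℝ) : Matrix n n ℂ :=
  cfc (fun x : ℝ => x ^ r) A

/-- Schatten `p`-norm `(Tr[(Y†Y)^(p/2)])^(1/p)`. -/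
noncomputable def schattenNorm (p : ℝ) (Y : Matrix n n ℂ) : ℝ :=
  ((mpow (Yᴴ * Y) (p / 2)).trace).re ^ (1 / p)

/-- `μ_α(X‖σ) = ‖σ^{(1-α)/(2α)} X σ^{(1-α)/(2α)}‖_α`. -/
noncomputable def muAlpha (α : ℝ) (X σ : Matrix n n ℂ) : ℝ :=
  schattenNorm α (mpow σ ((1 - α) / (2 * α)) * X * mpow σ ((1 - α) / (2 * α)))

/-- Partial transpose on the second tensor factor. -/
def ptranspose {a b : Type*} (ρ : Matrix (a × b) (a × b) ℂ) : Matrix (a × b) (a × b) ℂ :=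
  fun x y => ρ (x.1, y.2) (y.1, x.2)

/-- PPT states: positive semidefinite, positive partial transpose, unit trace. -/
def IsPPT {a b : Type*} [Fintype a] [Fintype b] (σ : Matrix (a × b) (a × b) ℂ) : Prop :=
  σ.PosSemidef ∧ (ptranspose σ).PosSemidef ∧ σ.trace = 1

/-- `ν_α(X‖σ)`, with the convention that it is `⊤` when `supp(X) ⊄ supp(σ)`. -/
noncomputable def nuAlpha (α : ℝ) (X σ : Matrix n n ℂ) : EReal :=
  if LinearMap.range (Matrix.toLin' X) ≤ LinearMap.range (Matrix.toLin' σ) then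
    ((Real.logb 2 (muAlpha α X σ) : ℝ) : EReal)
  else ⊤

/-- Logarithmic negativity `E_N(ρ) = log₂ ‖T_B(ρ)‖₁`. -/
noncomputable def EN {a b : Type*} [Fintype a] [Fintype b] [DecidableEq a] [DecidableEq b]
    (ρ : Matrix (a × b) (a × b) ℂ) : ℝ :=
  Real.logb 2 (schattenNorm 1 (ptranspose ρ))

/-- `α`-logarithmic negativity `E_N^α(ρ) = inf_{σ ∈ PPT} ν_α(T_B(ρ)‖σ)`. -/
noncomputable def ENalpha {a b : Type*} [Fintype a] [Fintype b] [DecidableEq a] [DecidableEq b]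
    (α : ℝ) (ρ : Matrix (a × b) (a × b) ℂ) : EReal :=
  ⨅ σ : {σ : Matrix (a × b) (a × b) ℂ // IsPPT σ}, nuAlpha α (ptranspose ρ) σ.1

lemma contOn (f : ℝ → ℝ) (A : Matrix n n ℂ) : ContinuousOn f (spectrum ℝ A) :=
  Set.Finite.continuousOn (Matrix.finite_real_spectrum (A := A)) f

lemma contOn' (f : ℝ → ℝ) (g : ℝ → ℝ) (A : Matrix n n ℂ) :
    ContinuousOn g (f '' spectrum ℝ A) :=
  Set.Finite.continuousOn (Set.Finite.image f (Matrix.finite_real_spectrum (A := A))) g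

lemma cfc_herm {A : Matrix n n ℂ} (hA : A.IsHermitian) (f : ℝ → ℝ) :
    cfc f A = (hA.eigenvectorUnitary : Matrix n n ℂ) *
      Matrix.diagonal (fun i => (f (hA.eigenvalues i) : ℂ)) *
      star (hA.eigenvectorUnitary : Matrix n n ℂ) := by
  rw [hA.cfc_eq f]; rfl

lemma trace_cfc' {A : Matrix n n ℂ} (hA : A.IsHermitian) (f : ℝ → ℝ) :
    (cfc f A).trace = ((∑ i, f (hA.eigenvalues i) : ℝ) : ℂ) := by
  rw [cfc_herm hA f, Matrix.trace_mul_cycle,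
    Unitary.coe_star_mul_self hA.eigenvectorUnitary, one_mul, Matrix.trace_diagonal]
  push_cast
  rfl

lemma trace_eq_sum_eigs {A : Matrix n n ℂ} (hA : A.IsHermitian) :
    A.trace = ((∑ i, hA.eigenvalues i : ℝ) : ℂ) := by
  conv_lhs => rw [← cfc_id ℝ A hA]
  exact trace_cfc' hA _

lemma mpow_herm {A : Matrix n n ℂ} (hA : A.IsHermitian) (r : ℝ) :
    mpow A r = (hA.eigenvectorUnitary : Matrix n n ℂ) *
      Matrix.diagonal (fun i => ((hA.eigenvalues i ^ r : ℝ) : ℂ)) *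
      star (hA.eigenvectorUnitary : Matrix n n ℂ) :=
  cfc_herm hA _

lemma mul_self_rpow_half (p : ℝ) (x : ℝ) : (x * x) ^ (p / 2) = |x| ^ p := by
  have h2 : x * x = |x| ^ (2 : ℝ) := by
    rw [show (2:ℝ) = ((2:ℕ):ℝ) by norm_num, Real.rpow_natCast, sq_abs, sq]
  rw [h2, ← Real.rpow_mul (abs_nonneg x)]
  congr 1
  ring

lemma schattenNorm_herm {Y : Matrix n n ℂ} (hY : Y.IsHermitian) (p : ℝ) :
    schattenNorm p Y = (∑ i, |hY.eigenvalues i| ^ p) ^ (1 / p) := by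
  have hsa : IsSelfAdjoint Y := hY
  have h1 : Yᴴ * Y = cfc (fun x : ℝ => x * x) Y := by
    rw [cfc_mul (fun x : ℝ => x) (fun x : ℝ => x) Y (contOn _ _) (contOn _ _), cfc_id' ℝ Y hsa,
      hY.eq]
  unfold schattenNorm mpow
  rw [h1, ← cfc_comp (fun x : ℝ => x ^ (p/2)) (fun x : ℝ => x * x) Y hsa
    (contOn' _ _ _) (contOn _ _)]
  have h3 : ((fun x : ℝ => x ^ (p/2)) ∘ (fun x : ℝ => x * x)) = fun x : ℝ => |x| ^ p := by
    funext x; exact mul_self_rpow_half p x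
  rw [h3, trace_cfc' hY, Complex.ofReal_re]

lemma rsign_mul_self (x : ℝ) : Real.sign x * x = |x| := by
  rcases lt_trichotomy x 0 with h | h | h
  · rw [Real.sign_of_neg h, abs_of_neg h]; ring
  · simp [h]
  · rw [Real.sign_of_pos h, abs_of_pos h]; ring

lemma abs_sign_le (x : ℝ) : |Real.sign x| ≤ 1 := by
  rcases lt_trichotomy x 0 with h | h | h
  · simp [Real.sign_of_neg h]
  · simp [h]
  · simp [Real.sign_of_pos h]

lemma snorm_one_herm {X : Matrix n n ℂ} (hX : X.IsHermitian) :
    schattenNorm 1 X = ∑ i, |hX.eigenvalues i| := by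
  rw [schattenNorm_herm hX 1]
  simp [Real.rpow_one]

lemma snorm_one_eq_trace_sign {X : Matrix n n ℂ} (hX : X.IsHermitian) :
    schattenNorm 1 X = ((cfc Real.sign X * X).trace).re := by
  have hsa : IsSelfAdjoint X := hX
  have h1 : cfc Real.sign X * X = cfc (fun x : ℝ => Real.sign x * x) X := by
    rw [cfc_mul Real.sign (fun x : ℝ => x) X (contOn _ _) (contOn _ _), cfc_id' ℝ X hsa]
  rw [h1, show (fun x : ℝ => Real.sign x * x) = fun x : ℝ => |x| from funext rsign_mul_self,
    trace_cfc' hX, Complex.ofReal_re, snorm_one_herm hX]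

lemma herm_spectral {A : Matrix n n ℂ} (hA : A.IsHermitian) :
    A = (hA.eigenvectorUnitary : Matrix n n ℂ) *
      Matrix.diagonal (fun i => ((hA.eigenvalues i : ℝ) : ℂ)) *
      star (hA.eigenvectorUnitary : Matrix n n ℂ) := by
  conv_lhs => rw [← cfc_id ℝ A hA]
  exact cfc_herm hA id

lemma uconj_mul {U : Matrix n n ℂ} (hU : star U * U = 1) (M N : Matrix n n ℂ) :
    (U * M * star U) * (U * N * star U) = U * (M * N) * star U := by
  have h : (U * M * star U) * (U * N * star U) = U * (M * ((star U * U) * (N * star U))) := by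
    simp only [mul_assoc]
  rw [h, hU, one_mul]
  simp only [mul_assoc]

lemma snorm_le_mu {X σ : Matrix n n ℂ} (α : ℝ) (hα : 1 < α)
    (hX : X.IsHermitian) (hσ : σ.PosSemidef) (hσtr : σ.trace = 1)
    (hr : LinearMap.range (Matrix.toLin' X) ≤ LinearMap.range (Matrix.toLin' σ)) :
    schattenNorm 1 X ≤ muAlpha α X σ := by
  have hα0 : (0:ℝ) < α := by linarith
  have hαne : α ≠ 0 := ne_of_gt hα0
  have hα1ne : α - 1 ≠ 0 := sub_ne_zero.mpr (ne_of_gt hα)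
  set c : ℝ := (1 - α) / (2 * α) with hc_def
  set d : ℝ := (α - 1) / (2 * α) with hd_def
  have hd : 0 < d := div_pos (by linarith) (by linarith)
  set α' : ℝ := α / (α - 1) with hα'_def
  have hconj : α.HolderConjugate α' := Real.HolderConjugate.conjExponent hα
  have hconj' : α'.HolderConjugate α := hconj.symm
  have hα'1 : 1 ≤ α' := le_of_lt hconj'.lt
  have h2dα' : 2 * d * α' = 1 := by
    rw [hd_def, hα'_def]
    field_simp
  -- spectral data of σ
  have hσh : σ.IsHermitian := hσ.1
  set s : n → ℝ := hσh.eigenvalues with hs_def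
  have hs0 : ∀ i, 0 ≤ s i := fun i => hσ.eigenvalues_nonneg i
  set U : Matrix n n ℂ := (hσh.eigenvectorUnitary : Matrix n n ℂ) with hU_def
  have hU1 : star U * U = 1 := Unitary.coe_star_mul_self hσh.eigenvectorUnitary
  have hU2 : U * star U = 1 := Unitary.coe_mul_star_self hσh.eigenvectorUnitary
  have hmp : ∀ r : ℝ, mpow σ r = U * Matrix.diagonal (fun i => ((s i ^ r : ℝ) : ℂ)) * star U :=
    fun r => mpow_herm hσh r
  have hσeq : σ = U * Matrix.diagonal (fun i => ((s i : ℝ) : ℂ)) * star U := herm_spectral hσh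
  -- X in the eigenbasis of σ
  set X' : Matrix n n ℂ := star U * X * U with hX'_def
  have hXc : U * X' * star U = X := by
    rw [hX'_def]
    have h : U * (star U * X * U) * star U = (U * star U) * X * (U * star U) := by
      simp only [mul_assoc]
    rw [h, hU2, one_mul, mul_one]
  have hX'h : X'.IsHermitian := by
    have : X'ᴴ = X' := by
      rw [hX'_def]
      simp only [Matrix.conjTranspose_mul, Matrix.star_eq_conjTranspose, Matrix.conjTranspose_conjTranspose]
      rw [hX.eq]
      simp only [mul_assoc]
    exact this
  -- support condition
  have hrow : ∀ i j, s i = 0 → X' i j = 0 := by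
    intro i j hsi
    have hmem : X *ᵥ (U *ᵥ Pi.single j 1) ∈ LinearMap.range (Matrix.toLin' σ) :=
      hr (LinearMap.mem_range.mpr ⟨U *ᵥ Pi.single j 1, Matrix.toLin'_apply _ _⟩)
    obtain ⟨w, hw⟩ := hmem
    have hw' : σ *ᵥ w = X *ᵥ (U *ᵥ Pi.single j 1) := by
      rw [← Matrix.toLin'_apply]; exact hw
    have e1 : X' i j = (star U *ᵥ (X *ᵥ (U *ᵥ Pi.single j 1))) i := by
      rw [Matrix.mulVec_mulVec, Matrix.mulVec_mulVec]
      simp [hX'_def, Matrix.mulVec_single]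
    rw [e1, ← hw', Matrix.mulVec_mulVec] at *
    have e2 : star U * σ = Matrix.diagonal (fun i => ((s i : ℝ) : ℂ)) * star U := by
      conv_lhs => rw [hσeq]
      have h : star U * (U * Matrix.diagonal (fun i => ((s i : ℝ) : ℂ)) * star U)
          = (star U * U) * (Matrix.diagonal (fun i => ((s i : ℝ) : ℂ)) * star U) := by
        simp only [mul_assoc]
      rw [h, hU1, one_mul]
    rw [e2, ← Matrix.mulVec_mulVec]
    simp [Matrix.mulVec, diagonal_dotProduct, hsi]
  have hcol : ∀ i j, s j = 0 → X' i j = 0 := by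
    intro i j hsj
    rw [← hX'h.apply i j, hrow j i hsj, star_zero]
  -- X recovered from Y by multiplying with mpow σ d
  set Y : Matrix n n ℂ := mpow σ c * X * mpow σ c with hY_def
  have hYsa : IsSelfAdjoint Y := by
    have hc : IsSelfAdjoint (mpow σ c) := cfc_predicate _ σ
    have hXsa : IsSelfAdjoint X := hX
    rw [hY_def]
    have : star (mpow σ c * X * mpow σ c) = mpow σ c * X * mpow σ c := by
      simp only [StarMul.star_mul, hc.star_eq, hXsa.star_eq, mul_assoc]
    exact this
  have hYh : Y.IsHermitian := hYsa
  have e2' : ∀ i, ((s i : ℝ) : ℂ) ^ 0 = 1 := by intro i; norm_num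
  have hdiag : Matrix.diagonal (fun i => ((s i ^ d : ℝ) : ℂ))
      * (Matrix.diagonal (fun i => ((s i ^ c : ℝ) : ℂ)) * X'
        * Matrix.diagonal (fun i => ((s i ^ c : ℝ) : ℂ)))
      * Matrix.diagonal (fun i => ((s i ^ d : ℝ) : ℂ)) = X' := by
    ext i j
    simp only [Matrix.diagonal_mul, Matrix.mul_diagonal]
    rcases eq_or_ne (s i) 0 with hi | hi
    · simp [hrow i j hi]
    rcases eq_or_ne (s j) 0 with hj | hj
    · simp [hcol i j hj]
    have hgi : ((s i ^ d : ℝ) : ℂ) * ((s i ^ c : ℝ) : ℂ) = 1 := by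
      rw [← Complex.ofReal_mul, ← Real.rpow_add (lt_of_le_of_ne (hs0 i) (Ne.symm hi)),
        show d + c = 0 by rw [hd_def, hc_def]; ring, Real.rpow_zero, Complex.ofReal_one]
    have hgj : ((s j ^ c : ℝ) : ℂ) * ((s j ^ d : ℝ) : ℂ) = 1 := by
      rw [← Complex.ofReal_mul, ← Real.rpow_add (lt_of_le_of_ne (hs0 j) (Ne.symm hj)),
        show c + d = 0 by rw [hd_def, hc_def]; ring, Real.rpow_zero, Complex.ofReal_one]
    calc ((s i ^ d : ℝ) : ℂ) * (((s i ^ c : ℝ) : ℂ) * X' i j * ((s j ^ c : ℝ) : ℂ))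
          * ((s j ^ d : ℝ) : ℂ)
        = (((s i ^ d : ℝ) : ℂ) * ((s i ^ c : ℝ) : ℂ)) * X' i j
          * (((s j ^ c : ℝ) : ℂ) * ((s j ^ d : ℝ) : ℂ)) := by ring
      _ = X' i j := by rw [hgi, hgj, one_mul, mul_one]
  have e1 : Y = U * (Matrix.diagonal (fun i => ((s i ^ c : ℝ) : ℂ)) * X'
      * Matrix.diagonal (fun i => ((s i ^ c : ℝ) : ℂ))) * star U := by
    rw [hY_def, hmp c]
    conv_lhs => rw [← hXc]
    rw [uconj_mul hU1, uconj_mul hU1]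
  have key2 : mpow σ d * Y * mpow σ d = X := by
    rw [e1, hmp d, uconj_mul hU1, uconj_mul hU1]
    rw [show (Matrix.diagonal (fun i => ((s i ^ d : ℝ) : ℂ))
      * (Matrix.diagonal (fun i => ((s i ^ c : ℝ) : ℂ)) * X'
        * Matrix.diagonal (fun i => ((s i ^ c : ℝ) : ℂ))))
      * Matrix.diagonal (fun i => ((s i ^ d : ℝ) : ℂ))
        = Matrix.diagonal (fun i => ((s i ^ d : ℝ) : ℂ))
      * (Matrix.diagonal (fun i => ((s i ^ c : ℝ) : ℂ)) * X'
        * Matrix.diagonal (fun i => ((s i ^ c : ℝ) : ℂ)))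
      * Matrix.diagonal (fun i => ((s i ^ d : ℝ) : ℂ)) from rfl, hdiag, hXc]
  -- sign matrix and spectral data of X, Y
  set UX : Matrix n n ℂ := (hX.eigenvectorUnitary : Matrix n n ℂ) with hUX_def
  have hUX2 : UX * star UX = 1 := Unitary.coe_mul_star_self hX.eigenvectorUnitary
  set DS : Matrix n n ℂ := Matrix.diagonal (fun k => ((Real.sign (hX.eigenvalues k) : ℝ) : ℂ))
    with hDS_def
  set S : Matrix n n ℂ := cfc Real.sign X with hS_def
  have hSeq : S = UX * DS * star UX := cfc_herm hX Real.sign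
  set V : Matrix n n ℂ := (hYh.eigenvectorUnitary : Matrix n n ℂ) with hV_def
  have hV1 : star V * V = 1 := Unitary.coe_star_mul_self hYh.eigenvectorUnitary
  have hV2 : V * star V = 1 := Unitary.coe_mul_star_self hYh.eigenvectorUnitary
  set t : n → ℝ := hYh.eigenvalues with ht_def
  have hYeq : Y = V * Matrix.diagonal (fun j => ((t j : ℝ) : ℂ)) * star V := herm_spectral hYh
  set Bd : Matrix n n ℂ := mpow σ d with hBd_def
  have hBdsa : IsSelfAdjoint Bd := cfc_predicate _ σ
  set W : Matrix n n ℂ := star V * Bd * S * Bd * V with hW_def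
  -- trace identity
  have htr1 : (S * X).trace = (W * Matrix.diagonal (fun j => ((t j : ℝ) : ℂ))).trace := by
    have h1 : S * X
        = (S * Bd * V * Matrix.diagonal (fun j => ((t j : ℝ) : ℂ))) * (star V * Bd) := by
      rw [← key2, hYeq]; simp only [hBd_def, mul_assoc]
    rw [h1, Matrix.trace_mul_comm]
    simp only [hW_def, mul_assoc]
  have htr2 : (W * Matrix.diagonal (fun j => ((t j : ℝ) : ℂ))).trace
      = ∑ j, W j j * ((t j : ℝ) : ℂ) := by
    simp [Matrix.trace, Matrix.diag, Matrix.mul_diagonal]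
  -- the matrices M and N
  set M : Matrix n n ℂ := star U * V with hM_def
  set N : Matrix n n ℂ := star V * Bd * UX with hN_def
  have hNW : W = N * DS * star N := by
    rw [hW_def, hN_def, hSeq]
    simp only [StarMul.star_mul, star_star, hBdsa.star_eq]
    simp only [mul_assoc]
  set p : n → n → ℝ := fun i j => Complex.normSq (M i j) with hp_def
  set w : n → ℝ := fun j => ∑ i, p i j * s i ^ (2*d) with hw_def
  have hwnn : ∀ j, 0 ≤ w j := fun j => Finset.sum_nonneg fun i _ =>
    mul_nonneg (Complex.normSq_nonneg _) (Real.rpow_nonneg (hs0 i) _)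
  have hBd2 : Bd * Bd = U * Matrix.diagonal (fun i => ((s i ^ (2*d) : ℝ) : ℂ)) * star U := by
    rw [hBd_def, hmp d, uconj_mul hU1, Matrix.diagonal_mul_diagonal]
    have hdd : (fun i => ((s i ^ d : ℝ) : ℂ) * ((s i ^ d : ℝ) : ℂ))
        = fun i => ((s i ^ (2*d) : ℝ) : ℂ) := funext fun i => by
      rw [← Complex.ofReal_mul, ← Real.rpow_add' (hs0 i) (by positivity),
        show d + d = 2*d by ring]
    rw [hdd]
  have hNN : N * star N = star M * Matrix.diagonal (fun i => ((s i ^ (2*d) : ℝ) : ℂ)) * M := by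
    calc N * star N = (star V * Bd * UX) * (star UX * (Bd * V)) := by
          rw [hN_def]; simp only [StarMul.star_mul, star_star, hBdsa.star_eq, mul_assoc]
      _ = star V * (Bd * Bd) * V := by
          have h : (star V * Bd * UX) * (star UX * (Bd * V))
              = star V * (Bd * ((UX * star UX) * (Bd * V))) := by simp only [mul_assoc]
          rw [h, hUX2, one_mul]; simp only [mul_assoc]
      _ = star M * Matrix.diagonal (fun i => ((s i ^ (2*d) : ℝ) : ℂ)) * M := by
          rw [hBd2, hM_def]; simp only [StarMul.star_mul, star_star]
          simp only [mul_assoc]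
  have hNsum : ∀ j, ∑ k, Complex.normSq (N j k) = w j := by
    intro j
    have h1 : (N * star N) j j = ((∑ k, Complex.normSq (N j k) : ℝ) : ℂ) := by
      rw [Matrix.mul_apply]
      push_cast
      refine Finset.sum_congr rfl fun k _ => ?_
      simp [Matrix.star_apply, Complex.star_def, Complex.mul_conj]
    have h2 : (star M * Matrix.diagonal (fun i => ((s i ^ (2*d) : ℝ) : ℂ)) * M) j j
        = ((w j : ℝ) : ℂ) := by
      rw [Matrix.mul_apply, hw_def]
      push_cast
      refine Finset.sum_congr rfl fun i _ => ?_
      rw [Matrix.mul_diagonal, Matrix.star_apply, Complex.star_def,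
        show (starRingEnd ℂ) (M i j) * ((s i ^ (2*d) : ℝ) : ℂ) * M i j
          = (M i j * (starRingEnd ℂ) (M i j)) * ((s i ^ (2*d) : ℝ) : ℂ) from by ring,
        Complex.mul_conj]
    have h3 : ((∑ k, Complex.normSq (N j k) : ℝ) : ℂ) = ((w j : ℝ) : ℂ) := by
      rw [← h1, hNN, h2]
    exact_mod_cast h3
  -- entrywise bound ‖W j j‖ ≤ w j
  have hWb : ∀ j, ‖W j j‖ ≤ w j := by
    intro j
    have hexp : W j j = ∑ k, (N j k * ((Real.sign (hX.eigenvalues k) : ℝ) : ℂ)) * star (N j k) := by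
      rw [hNW, hDS_def, Matrix.mul_apply]
      refine Finset.sum_congr rfl fun k _ => ?_
      rw [Matrix.mul_diagonal, Matrix.star_apply]
    have hbk : ∀ k, ‖(N j k * ((Real.sign (hX.eigenvalues k) : ℝ) : ℂ)) * star (N j k)‖
        ≤ Complex.normSq (N j k) := by
      intro k
      rw [norm_mul, norm_mul, norm_star, Complex.norm_real, Real.norm_eq_abs]
      calc ‖N j k‖ * |Real.sign (hX.eigenvalues k)| * ‖N j k‖
          ≤ ‖N j k‖ * 1 * ‖N j k‖ := by
            exact mul_le_mul_of_nonneg_right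
              (mul_le_mul_of_nonneg_left (abs_sign_le _) (norm_nonneg _)) (norm_nonneg _)
        _ = Complex.normSq (N j k) := by
            rw [mul_one, ← Complex.sq_norm, sq]
    calc ‖W j j‖ ≤ ∑ k, ‖(N j k * ((Real.sign (hX.eigenvalues k) : ℝ) : ℂ)) * star (N j k)‖ := by
          rw [hexp]; exact norm_sum_le _ _
      _ ≤ ∑ k, Complex.normSq (N j k) := Finset.sum_le_sum fun k _ => hbk k
      _ = w j := hNsum j
  -- sums of the doubly stochastic weights
  have hcolsum : ∀ j, ∑ i, p i j = 1 := by
    intro j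
    have hMM : star M * M = 1 := by
      rw [hM_def]
      simp only [StarMul.star_mul, star_star, mul_assoc]
      rw [show U * (star U * V) = (U * star U) * V from by simp only [mul_assoc], hU2, one_mul,
        hV1]
    have h2 : (star M * M) j j = ((∑ i, p i j : ℝ) : ℂ) := by
      rw [Matrix.mul_apply]
      push_cast
      refine Finset.sum_congr rfl fun i _ => ?_
      rw [Matrix.star_apply, Complex.star_def, mul_comm, Complex.mul_conj]
    rw [hMM] at h2
    have h3 : ((1:ℝ):ℂ) = ((∑ i, p i j : ℝ) : ℂ) := by
      rw [← h2]; simp [Matrix.one_apply_eq]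
    exact_mod_cast h3.symm
  have hrowsum : ∀ i, ∑ j, p i j = 1 := by
    intro i
    have hMM : M * star M = 1 := by
      rw [hM_def]
      simp only [StarMul.star_mul, star_star, mul_assoc]
      rw [show V * (star V * U) = (V * star V) * U from by simp only [mul_assoc], hV2, one_mul,
        hU1]
    have h2 : (M * star M) i i = ((∑ j, p i j : ℝ) : ℂ) := by
      rw [Matrix.mul_apply]
      push_cast
      refine Finset.sum_congr rfl fun j _ => ?_
      rw [Matrix.star_apply, Complex.star_def, Complex.mul_conj]
    rw [hMM] at h2
    have h3 : ((1:ℝ):ℂ) = ((∑ j, p i j : ℝ) : ℂ) := by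
      rw [← h2]; simp [Matrix.one_apply_eq]
    exact_mod_cast h3.symm
  have hsums : ∑ i, s i = 1 := by
    have h := trace_eq_sum_eigs hσh
    rw [hσtr] at h
    exact_mod_cast h.symm
  -- Jensen step
  have hJ1 : ∀ j, w j ^ α' ≤ ∑ i, p i j * s i := by
    intro j
    have hj := Real.rpow_arith_mean_le_arith_mean_rpow Finset.univ (fun i => p i j)
      (fun i => s i ^ (2*d)) (fun i _ => Complex.normSq_nonneg _) (hcolsum j)
      (fun i _ => Real.rpow_nonneg (hs0 i) _) hα'1
    rw [hw_def]
    refine le_trans hj (le_of_eq (Finset.sum_congr rfl fun i _ => ?_))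
    rw [← Real.rpow_mul (hs0 i), h2dα', Real.rpow_one]
  have hJ : ∑ j, w j ^ α' ≤ 1 := by
    calc ∑ j, w j ^ α' ≤ ∑ j, ∑ i, p i j * s i := Finset.sum_le_sum fun j _ => hJ1 j
      _ = ∑ i, ∑ j, p i j * s i := Finset.sum_comm
      _ = ∑ i, s i := by
          refine Finset.sum_congr rfl fun i _ => ?_
          rw [← Finset.sum_mul, hrowsum i, one_mul]
      _ = 1 := hsums
  have hApow : (∑ j, w j ^ α') ^ (1/α') ≤ 1 :=
    Real.rpow_le_one (Finset.sum_nonneg fun j _ => Real.rpow_nonneg (hwnn j) _) hJ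
      (by positivity)
  -- final chain
  have hfin1 : schattenNorm 1 X = ∑ j, (W j j).re * t j := by
    rw [snorm_one_eq_trace_sign hX, ← hS_def, htr1, htr2, Complex.re_sum]
    refine Finset.sum_congr rfl fun j _ => ?_
    simp [Complex.mul_re]
  have hterm : ∀ j, (W j j).re * t j ≤ w j * |t j| := by
    intro j
    have h3 : |(W j j).re| ≤ ‖W j j‖ := by
      exact Complex.abs_re_le_norm _
    calc (W j j).re * t j ≤ |(W j j).re * t j| := le_abs_self _
      _ = |(W j j).re| * |t j| := abs_mul _ _
      _ ≤ ‖W j j‖ * |t j| := mul_le_mul_of_nonneg_right h3 (abs_nonneg _)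
      _ ≤ w j * |t j| := mul_le_mul_of_nonneg_right (hWb j) (abs_nonneg _)
  have hHolder : ∑ j, w j * |t j| ≤ (∑ j, w j ^ α') ^ (1/α') * (∑ j, |t j| ^ α) ^ (1/α) :=
    Real.inner_le_Lp_mul_Lq_of_nonneg _ hconj' (fun j _ => hwnn j) (fun j _ => abs_nonneg _)
  have hμ : muAlpha α X σ = (∑ j, |t j| ^ α) ^ (1/α) := by
    unfold muAlpha
    rw [← hc_def, ← hY_def, schattenNorm_herm hYh α, ← ht_def]
  calc schattenNorm 1 X = ∑ j, (W j j).re * t j := hfin1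
    _ ≤ ∑ j, w j * |t j| := Finset.sum_le_sum fun j _ => hterm j
    _ ≤ (∑ j, w j ^ α') ^ (1/α') * (∑ j, |t j| ^ α) ^ (1/α) := hHolder
    _ ≤ 1 * (∑ j, |t j| ^ α) ^ (1/α) := mul_le_mul_of_nonneg_right hApow
        (Real.rpow_nonneg (Finset.sum_nonneg fun j _ => Real.rpow_nonneg (abs_nonneg _) _) _)
    _ = muAlpha α X σ := by rw [one_mul, hμ]

lemma mpow_zero' {σ : Matrix n n ℂ} (hσ : σ.IsHermitian) : mpow σ 0 = 1 := by
  unfold mpow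
  rw [show (fun x : ℝ => x ^ (0:ℝ)) = (1 : ℝ → ℝ) from funext fun x => by
    rw [Real.rpow_zero]; rfl]
  have hsa : IsSelfAdjoint σ := hσ
  exact cfc_one ℝ σ hsa

lemma snorm_le_mu_weak {X σ : Matrix n n ℂ} (α : ℝ) (hα : 1 ≤ α)
    (hX : X.IsHermitian) (hσ : σ.PosSemidef) (hσtr : σ.trace = 1)
    (hr : LinearMap.range (Matrix.toLin' X) ≤ LinearMap.range (Matrix.toLin' σ)) :
    schattenNorm 1 X ≤ muAlpha α X σ := by
  rcases eq_or_lt_of_le hα with h1 | h1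
  · unfold muAlpha
    rw [show ((1 - α) / (2 * α) : ℝ) = 0 by rw [← h1]; norm_num, mpow_zero' hσ.1,
      one_mul, mul_one, ← h1]
  · exact snorm_le_mu α h1 hX hσ hσtr hr

lemma nuAlpha_self_eq_zero {X : Matrix n n ℂ} (hX : X.PosSemidef) (htr : X.trace = 1)
    (α : ℝ) (hα : 1 ≤ α) : nuAlpha α X X = 0 := by
  have hXh : X.IsHermitian := hX.1
  have hXsa : IsSelfAdjoint X := hXh
  have hα0 : (0:ℝ) < α := lt_of_lt_of_le one_pos hα
  have hαne : α ≠ 0 := ne_of_gt hα0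
  set c : ℝ := (1 - α) / (2 * α) with hc_def
  have hev0 : ∀ i, 0 ≤ hXh.eigenvalues i := fun i => hX.eigenvalues_nonneg i
  have hspec : ∀ x ∈ spectrum ℝ X, 0 ≤ x := by
    intro x hx
    rw [hXh.spectrum_real_eq_range_eigenvalues] at hx
    obtain ⟨i, rfl⟩ := hx
    exact hev0 i
  -- scalar identities
  have hscalA : ∀ x : ℝ, 0 ≤ x → x ^ c * x * x ^ c = x ^ (1/α) := by
    intro x hx
    rcases eq_or_lt_of_le hx with h0 | h0
    · rw [← h0, mul_zero, zero_mul, Real.zero_rpow (one_div_ne_zero hαne)]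
    · rw [show (1/α : ℝ) = c + 1 + c by rw [hc_def]; field_simp; ring,
        Real.rpow_add h0, Real.rpow_add h0, Real.rpow_one]
  have hscalB : ∀ x : ℝ, 0 ≤ x → (x ^ (1/α) * x ^ (1/α)) ^ (α/2) = x := by
    intro x hx
    rcases eq_or_lt_of_le hx with h0 | h0
    · rw [← h0, Real.zero_rpow (one_div_ne_zero hαne), mul_zero,
        Real.zero_rpow (by positivity)]
    · rw [← Real.rpow_add h0, ← Real.rpow_mul (le_of_lt h0),
        show (1/α + 1/α) * (α/2) = 1 by field_simp; norm_num, Real.rpow_one]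
  -- mpow X c * X * mpow X c = cfc (x ^ (1/α))
  have h1 : mpow X c * X * mpow X c = cfc (fun x : ℝ => x ^ (1/α)) X := by
    have e0 : mpow X c * X * mpow X c
        = cfc (fun x : ℝ => x ^ c) X * cfc (fun x : ℝ => x) X * cfc (fun x : ℝ => x ^ c) X := by
      rw [cfc_id' ℝ X hXsa]
      rfl
    have e1 : cfc (fun x : ℝ => x ^ c) X * cfc (fun x : ℝ => x) X
        = cfc (fun x : ℝ => x ^ c * x) X :=
      (cfc_mul _ _ X (contOn _ _) (contOn _ _)).symm
    have e2 : cfc (fun x : ℝ => x ^ c * x) X * cfc (fun x : ℝ => x ^ c) X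
        = cfc (fun x : ℝ => (x ^ c * x) * x ^ c) X :=
      (cfc_mul _ _ X (contOn _ _) (contOn _ _)).symm
    rw [e0, e1, e2]
    exact cfc_congr fun x hx => hscalA x (hspec x hx)
  -- schattenNorm α of that equals 1
  have h2 : schattenNorm α (cfc (fun x : ℝ => x ^ (1/α)) X) = 1 := by
    have hZsa : IsSelfAdjoint (cfc (fun x : ℝ => x ^ (1/α)) X) := cfc_predicate _ X
    have hm : cfc (fun x : ℝ => x ^ (1/α)) X * cfc (fun x : ℝ => x ^ (1/α)) X
        = cfc (fun x : ℝ => x ^ (1/α) * x ^ (1/α)) X :=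
      (cfc_mul _ _ X (contOn _ _) (contOn _ _)).symm
    have hcmp : cfc (fun x : ℝ => x ^ (α/2)) (cfc (fun x : ℝ => x ^ (1/α) * x ^ (1/α)) X)
        = cfc ((fun x : ℝ => x ^ (α/2)) ∘ (fun x : ℝ => x ^ (1/α) * x ^ (1/α))) X :=
      (cfc_comp _ _ X hXsa (contOn' _ _ _) (contOn _ _)).symm
    have hcongr : cfc ((fun x : ℝ => x ^ (α/2)) ∘ (fun x : ℝ => x ^ (1/α) * x ^ (1/α))) X
        = cfc (fun x : ℝ => x) X :=
      cfc_congr fun x hx => by simpa using hscalB x (hspec x hx)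
    unfold schattenNorm mpow
    rw [← Matrix.star_eq_conjTranspose, hZsa.star_eq, hm, hcmp, hcongr, cfc_id' ℝ X hXsa, htr]
    simp [Real.one_rpow]
  unfold nuAlpha
  rw [if_pos le_rfl]
  unfold muAlpha
  rw [← hc_def, h1, h2]
  simp [Real.logb_one]

lemma ptranspose_trace {a b : Type*} [Fintype a] [Fintype b] (ρ : Matrix (a × b) (a × b) ℂ) :
    (ptranspose ρ).trace = ρ.trace := by
  simp [ptranspose, Matrix.trace, Matrix.diag]

lemma ptranspose_herm {a b : Type*} [Fintype a] [Fintype b] {ρ : Matrix (a × b) (a × b) ℂ}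
    (hρ : ρ.IsHermitian) : (ptranspose ρ).IsHermitian := by
  have : (ptranspose ρ)ᴴ = ptranspose ρ := by
    ext x y
    rw [Matrix.conjTranspose_apply]
    show star (ρ (y.1, x.2) (x.1, y.2)) = ρ (x.1, y.2) (y.1, x.2)
    exact hρ.apply _ _
  exact this

lemma snorm_one_ge {X : Matrix n n ℂ} (hX : X.IsHermitian) (htr : X.trace = 1) :
    1 ≤ schattenNorm 1 X := by
  rw [snorm_one_herm hX]
  have h := trace_eq_sum_eigs hX
  rw [htr] at h
  have h1 : ∑ i, hX.eigenvalues i = 1 := by exact_mod_cast h.symm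
  calc (1:ℝ) = ∑ i, hX.eigenvalues i := h1.symm
    _ ≤ ∑ i, |hX.eigenvalues i| := Finset.sum_le_sum fun i _ => le_abs_self _

lemma psd_of_snorm_one_le {X : Matrix n n ℂ} (hX : X.IsHermitian) (htr : X.trace = 1)
    (hle : schattenNorm 1 X ≤ 1) : X.PosSemidef := by
  rw [snorm_one_herm hX] at hle
  have h := trace_eq_sum_eigs hX
  rw [htr] at h
  have h1 : ∑ i, hX.eigenvalues i = 1 := by exact_mod_cast h.symm
  have hz : ∀ i ∈ Finset.univ (α := n), 0 ≤ |hX.eigenvalues i| - hX.eigenvalues i :=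
    fun i _ => sub_nonneg.mpr (le_abs_self _)
  have hsum : ∑ i, (|hX.eigenvalues i| - hX.eigenvalues i) = 0 := by
    apply le_antisymm
    · rw [Finset.sum_sub_distrib, h1]; linarith
    · exact Finset.sum_nonneg hz
  have hall := (Finset.sum_eq_zero_iff_of_nonneg hz).mp hsum
  refine hX.posSemidef_iff_eigenvalues_nonneg.mpr fun i => show 0 ≤ hX.eigenvalues i from ?_
  have h2 := hall i (Finset.mem_univ i)
  have h3 := abs_nonneg (hX.eigenvalues i)
  linarith

/-- faithfulness: `E_N^α(ρ) ≥ 0`, with equality iff `ρ` is PPT. -/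
theorem ENalpha_faithful {a b : Type*}
    [Fintype a] [Fintype b] [DecidableEq a] [DecidableEq b]
    (ρ : Matrix (a × b) (a × b) ℂ) (hρ : ρ.PosSemidef) (hρtr : ρ.trace = 1)
    (α : ℝ) (hα : 1 ≤ α) :
    (0 : EReal) ≤ ENalpha α ρ ∧ (ENalpha α ρ = 0 ↔ IsPPT ρ) := by
  have hXh : (ptranspose ρ).IsHermitian := ptranspose_herm hρ.1
  have hXtr : (ptranspose ρ).trace = 1 := by rw [ptranspose_trace, hρtr]
  have hL1 : 1 ≤ schattenNorm 1 (ptranspose ρ) := snorm_one_ge hXh hXtr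
  have hlb : ∀ σ : {σ : Matrix (a × b) (a × b) ℂ // IsPPT σ},
      ((Real.logb 2 (schattenNorm 1 (ptranspose ρ)) : ℝ) : EReal) ≤ nuAlpha α (ptranspose ρ) σ.1 := by
    rintro ⟨σ, hσpsd, hσppt, hσtr⟩
    unfold nuAlpha
    split_ifs with hcond
    · rw [EReal.coe_le_coe_iff]
      exact Real.logb_le_logb_of_le one_lt_two (by linarith)
        (snorm_le_mu_weak α hα hXh hσpsd hσtr hcond)
    · exact le_top
  have hEge : ((Real.logb 2 (schattenNorm 1 (ptranspose ρ)) : ℝ) : EReal) ≤ ENalpha α ρ :=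
    le_iInf hlb
  have hlog0 : 0 ≤ Real.logb 2 (schattenNorm 1 (ptranspose ρ)) :=
    Real.logb_nonneg one_lt_two hL1
  have hge0 : (0 : EReal) ≤ ENalpha α ρ := by
    refine le_trans ?_ hEge
    rw [show (0 : EReal) = ((0:ℝ) : EReal) by rfl, EReal.coe_le_coe_iff]
    exact hlog0
  refine ⟨hge0, ?_, ?_⟩
  · intro h0
    have h1 : ((Real.logb 2 (schattenNorm 1 (ptranspose ρ)) : ℝ) : EReal) ≤ ((0:ℝ) : EReal) := by
      rw [show ((0:ℝ):EReal) = (0 : EReal) by rfl, ← h0]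
      exact hEge
    rw [EReal.coe_le_coe_iff] at h1
    have h3 : schattenNorm 1 (ptranspose ρ) ≤ 1 := by
      by_contra hgt
      push_neg at hgt
      have := Real.logb_pos one_lt_two hgt
      linarith
    exact ⟨hρ, psd_of_snorm_one_le hXh hXtr h3, hρtr⟩
  · intro hppt
    have hXppt : IsPPT (ptranspose ρ) :=
      ⟨hppt.2.1, show (ptranspose (ptranspose ρ)).PosSemidef from hρ, hXtr⟩
    have hub : ENalpha α ρ ≤ nuAlpha α (ptranspose ρ) (ptranspose ρ) :=
      iInf_le _ (⟨ptranspose ρ, hXppt⟩ : {σ : Matrix (a × b) (a × b) ℂ // IsPPT σ})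
    rw [nuAlpha_self_eq_zero hppt.2.1 hXtr α hα] at hub
    exact le_antisymm hub hge0
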